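/- arXiv:1806.10644 — 2 statements merged into one kernel-verified Lean document; each statement's English description precedes it below -/
import Mathlib

section
/- Let f : [0,1]^{n_x} → ℝ be a continuous piecewise affine function that is nonnegative on [0,1]^{n_x}. Then there exist depths r_γ, r_η ≥ 1 and parameters θ_γ, θ_η such that f(x) = N(x;θ_γ, n_x+1, r_γ) − N(x;θ_η, n_x+1, r_η) for all x ∈ [0,1]^{n_x}, where both neural networks are ReLU networks of width n_x + 1. -/
open Finset Matrix

/-- The affine map `x ↦ W x + b`. -/
def affineMapVec {m n : ℕ} (W : Matrix (Fin m) (Fin n) ℝ) (b : Fin m → ℝ)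
    (x : Fin n → ℝ) : Fin m → ℝ :=
  fun i => (∑ j, W i j * x j) + b i

/-- Componentwise rectifier (ReLU). -/
def reluVec {n : ℕ} (v : Fin n → ℝ) : Fin n → ℝ := fun i => max 0 (v i)

/-- Parameters θ of a feed-forward ReLU network with `L ≥ 1` hidden layers of width `M`,
input dimension `nx` and output dimension `nu`:  the first hidden layer `(W1, b1)`,
the `L - 1` remaining hidden layers `(W l, b l)`, and the output layer `(Wout, bout)`. -/
structure ReLUNetParams (nx nu M L : ℕ) where
  W1 : Matrix (Fin M) (Fin nx) ℝ
  b1 : Fin M → ℝ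
  W : Fin (L - 1) → Matrix (Fin M) (Fin M) ℝ
  b : Fin (L - 1) → Fin M → ℝ
  Wout : Matrix (Fin nu) (Fin M) ℝ
  bout : Fin nu → ℝ

/-- The function `N(·; θ, M, L) = f_{L+1} ∘ g_L ∘ f_L ∘ ⋯ ∘ g_1 ∘ f_1` computed by the
ReLU network with parameters `θ`. -/
def ReLUNetParams.eval {nx nu M L : ℕ} (p : ReLUNetParams nx nu M L)
    (x : Fin nx → ℝ) : Fin nu → ℝ :=
  affineMapVec p.Wout p.bout <|
    (List.finRange (L - 1)).foldl
      (fun ξ l => reluVec (affineMapVec (p.W l) (p.b l) ξ))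
      (reluVec (affineMapVec p.W1 p.b1 x))

/-- A polyhedron `{x | Z x ≤ z}`. -/
def IsPolyhedron {n : ℕ} (S : Set (Fin n → ℝ)) : Prop :=
  ∃ (m : ℕ) (Z : Matrix (Fin m) (Fin n) ℝ) (z : Fin m → ℝ),
    S = {x | ∀ i, (∑ j, Z i j * x j) ≤ z i}

/-- `f` is piecewise affine on `D`: finitely many polyhedra with pairwise disjoint
interiors whose union is `D`, with `f` affine on each. -/
def IsPWAOn {n m : ℕ} (D : Set (Fin n → ℝ)) (f : (Fin n → ℝ) → Fin m → ℝ) : Prop :=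
  ∃ (r : ℕ) (R : Fin r → Set (Fin n → ℝ))
    (K : Fin r → Matrix (Fin m) (Fin n) ℝ) (g : Fin r → Fin m → ℝ),
    (∀ i, IsPolyhedron (R i)) ∧
    (∀ i j, i ≠ j → interior (R i) ∩ interior (R j) = ∅) ∧
    (⋃ i, R i) = D ∧
    (∀ i, ∀ x ∈ R i, f x = affineMapVec (K i) (g i) x)

/-- Scalar-valued piecewise affine function on `D`. -/
def IsPWAOnScalar {n : ℕ} (D : Set (Fin n → ℝ)) (f : (Fin n → ℝ) → ℝ) : Prop :=
  ∃ (r : ℕ) (R : Fin r → Set (Fin n → ℝ)) (a : Fin r → Fin n → ℝ) (c : Fin r → ℝ),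
    (∀ i, IsPolyhedron (R i)) ∧
    (∀ i j, i ≠ j → interior (R i) ∩ interior (R j) = ∅) ∧
    (⋃ i, R i) = D ∧
    (∀ i, ∀ x ∈ R i, f x = (∑ j, a i j * x j) + c i)

/-- `f` agrees with some affine function on the set `S`. -/
def AffineOnSet {n m : ℕ} (f : (Fin n → ℝ) → Fin m → ℝ) (S : Set (Fin n → ℝ)) : Prop :=
  ∃ (A : Matrix (Fin m) (Fin n) ℝ) (b : Fin m → ℝ), ∀ x ∈ S, f x = affineMapVec A b x

/-- A linear region of `f`: a nonempty open connected set on which `f` is affine,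
maximal with this property. -/
def IsLinearRegion {n m : ℕ} (f : (Fin n → ℝ) → Fin m → ℝ) (S : Set (Fin n → ℝ)) : Prop :=
  S.Nonempty ∧ IsOpen S ∧ IsConnected S ∧ AffineOnSet f S ∧
    ∀ S', IsOpen S' → IsConnected S' → S ⊂ S' → ¬ AffineOnSet f S'

/-- Maximum of a nonempty finite family of reals. -/
noncomputable def finMax {N : ℕ} (hN : 0 < N) (g : Fin N → ℝ) : ℝ :=
  Finset.univ.sup' (Finset.univ_nonempty_iff.mpr (Fin.pos_iff_nonempty.mp hN)) g

/-- The unit hypercube `[0,1]^n`. -/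
def unitCube (n : ℕ) : Set (Fin n → ℝ) := {x | ∀ i, 0 ≤ x i ∧ x i ≤ 1}

section AuxNN
open Set

lemma foldl_finRange {α : Type*} : ∀ (n : ℕ) (g : α → Fin n → α) (st : ℕ → α),
    (∀ l : Fin n, g (st l) l = st (l + 1)) →
    List.foldl g (st 0) (List.finRange n) = st n := by
  intro n
  induction n with
  | zero => intro g st _; simp [List.finRange]
  | succ n ih =>
    intro g st h
    rw [List.finRange_succ, List.foldl_cons, List.foldl_map]
    have h0 : g (st 0) (0 : Fin (n+1)) = st 1 := by
      have := h 0; simpa using this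
    rw [h0]
    exact ih (fun a l => g a l.succ) (fun t => st (t + 1))
      (fun l => by have := h l.succ; simpa [Fin.val_succ, Nat.add_comm, Nat.add_assoc] using this)

lemma sup'_neg_eq {κ : Type*} (s : Finset κ) (hs : s.Nonempty) (g : κ → ℝ) :
    s.sup' hs (fun k => -g k) = -s.inf' hs g := by
  apply le_antisymm
  · exact Finset.sup'_le _ _ fun k hk => neg_le_neg (Finset.inf'_le g hk)
  · obtain ⟨k, hk, he⟩ := Finset.exists_mem_eq_inf' hs g
    rw [he]
    exact Finset.le_sup' (fun k => -g k) hk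

lemma sup'_const_sub {κ : Type*} (s : Finset κ) (hs : s.Nonempty) (C : ℝ) (g : κ → ℝ) :
    s.sup' hs (fun k => C - g k) = C - s.inf' hs g := by
  apply le_antisymm
  · exact Finset.sup'_le _ _ fun k hk => sub_le_sub_left (Finset.inf'_le g hk) C
  · obtain ⟨k, hk, he⟩ := Finset.exists_mem_eq_inf' hs g
    rw [he]
    exact Finset.le_sup' (fun k => C - g k) hk

lemma sup'_prod_eq {κ₁ κ₂ : Type*} [Fintype κ₁] [Fintype κ₂] [Nonempty κ₁] [Nonempty κ₂]
    (F : κ₁ × κ₂ → ℝ) :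
    (univ : Finset (κ₁ × κ₂)).sup' (univ_nonempty_iff.mpr inferInstance) F
      = (univ : Finset κ₁).sup' (univ_nonempty_iff.mpr inferInstance)
          (fun a => (univ : Finset κ₂).sup' (univ_nonempty_iff.mpr inferInstance)
            (fun b => F (a, b))) := by
  apply le_antisymm
  · refine Finset.sup'_le _ _ fun p _ => ?_
    calc F p = F (p.1, p.2) := by rw [Prod.mk.eta]
    _ ≤ (univ : Finset κ₂).sup' (univ_nonempty_iff.mpr inferInstance) (fun b => F (p.1, b)) :=
        Finset.le_sup' (fun b => F (p.1, b)) (mem_univ p.2)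
    _ ≤ _ := Finset.le_sup'
        (fun a => (univ : Finset κ₂).sup' (univ_nonempty_iff.mpr inferInstance) (fun b => F (a, b)))
        (mem_univ p.1)
  · refine Finset.sup'_le _ _ fun a _ => Finset.sup'_le _ _ fun b _ => ?_
    exact Finset.le_sup' F (mem_univ (a, b))

lemma sup'_equiv_fin {ι : Type*} [Fintype ι] [Nonempty ι] {N : ℕ} (hN : 0 < N)
    (e : ι ≃ Fin N) (g : ι → ℝ) :
    (univ : Finset (Fin N)).sup' (univ_nonempty_iff.mpr ⟨⟨0, hN⟩⟩) (fun k => g (e.symm k))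
      = (univ : Finset ι).sup' (univ_nonempty_iff.mpr inferInstance) g := by
  apply le_antisymm
  · exact Finset.sup'_le _ _ fun k _ => Finset.le_sup' g (mem_univ _)
  · refine Finset.sup'_le _ _ fun i _ => ?_
    have : g i = g (e.symm (e i)) := by simp
    rw [this]
    exact Finset.le_sup' (fun k => g (e.symm k)) (mem_univ (e i))

lemma foldl_finRange' {α : Type*} : ∀ (n : ℕ) (g : α → Fin n → α) (st : ℕ → α),
    (∀ l : Fin n, g (st l) l = st (l + 1)) →
    List.foldl g (st 0) (List.finRange n) = st n := by
  intro n
  induction n with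
  | zero => intro g st _; simp [List.finRange]
  | succ n ih =>
    intro g st h
    rw [List.finRange_succ, List.foldl_cons, List.foldl_map]
    have h0 : g (st 0) (0 : Fin (n+1)) = st 1 := by
      have := h 0; simpa using this
    rw [h0]
    exact ih (fun a l => g a l.succ) (fun t => st (t + 1))
      (fun l => by have := h l.succ; simpa [Fin.val_succ, Nat.add_comm, Nat.add_assoc] using this)

lemma exists_relu_net_sup (nx N : ℕ) (hN : 0 < N) (A : Fin N → Fin nx → ℝ) (B : Fin N → ℝ) :
    ∃ L : ℕ, 1 ≤ L ∧ ∃ θ : ReLUNetParams nx 1 (nx + 1) L,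
      ∀ x : Fin nx → ℝ, (∀ i, 0 ≤ x i) →
        θ.eval x 0 = Finset.univ.sup' (univ_nonempty_iff.mpr ⟨⟨0, hN⟩⟩)
          (fun k => (∑ j, A k j * x j) + B k) := by
  classical
  -- clamped index
  set idx : ℕ → Fin N := fun t => ⟨min t (N - 1), by omega⟩ with hidx
  set A' : ℕ → Fin nx → ℝ := fun t => A (idx t) with hA'
  set B' : ℕ → ℝ := fun t => B (idx t) with hB'
  set ℓ : ℕ → (Fin nx → ℝ) → ℝ := fun t x => (∑ j, A' t j * x j) + B' t with hℓ
  refine ⟨N, hN, ?_⟩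
  refine ⟨⟨
    -- W1
    fun i => Fin.lastCases (fun j => A' 0 j - A' 1 j)
      (fun i' j => if j = i' then (1:ℝ) else 0) i,
    -- b1
    Fin.lastCases (B' 0 - B' 1) (fun _ => 0),
    -- W
    fun l i => Fin.lastCases
      (Fin.lastCases (1:ℝ) (fun j' => A' ((l:ℕ) + 1) j' - A' ((l:ℕ) + 2) j'))
      (fun i' => fun j => if j = Fin.castSucc i' then (1:ℝ) else 0) i,
    -- b
    fun l => Fin.lastCases (B' ((l:ℕ) + 1) - B' ((l:ℕ) + 2)) (fun _ => 0),
    -- Wout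
    fun _ => Fin.lastCases (1:ℝ) (fun j' => A' N j'),
    -- bout
    fun _ => B' N⟩, ?_⟩
  intro x hx
  -- running max
  have hrne : ∀ t : ℕ, (Finset.range (t + 1)).Nonempty := fun t => ⟨0, by simp⟩
  set Mx : ℕ → ℝ := fun t => (Finset.range (t + 1)).sup' (hrne t) (fun k => ℓ k x) with hMx
  set u : ℕ → ℝ := fun t => Mx t - ℓ t x with hu
  set st : ℕ → (Fin (nx + 1) → ℝ) :=
    fun t => fun i => Fin.lastCases (motive := fun _ => ℝ) (u t) (fun i' => x i') i with hst
  have hM0 : Mx 0 = ℓ 0 x := by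
    apply le_antisymm
    · refine Finset.sup'_le _ _ fun k hk => ?_
      have hk0 : k = 0 := by have := Finset.mem_range.mp hk; omega
      rw [hk0]
    · exact Finset.le_sup' (fun k => ℓ k x) (by simp)
  have hMsucc : ∀ t : ℕ, Mx (t + 1) = max (Mx t) (ℓ (t + 1) x) := by
    intro t
    apply le_antisymm
    · refine Finset.sup'_le _ _ fun k hk => ?_
      have hk' : k < t + 2 := Finset.mem_range.mp hk
      rcases Nat.lt_or_ge k (t + 1) with h | h
      · exact le_max_of_le_left (Finset.le_sup' (fun k => ℓ k x) (Finset.mem_range.mpr h))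
      · have : k = t + 1 := by omega
        rw [this]; exact le_max_right _ _
    · apply max_le
      · refine Finset.sup'_le _ _ fun k hk => ?_
        have : k < t + 1 := Finset.mem_range.mp hk
        exact Finset.le_sup' (fun k => ℓ k x) (Finset.mem_range.mpr (by omega))
      · exact Finset.le_sup' (fun k => ℓ k x) (Finset.mem_range.mpr (by omega))
  have hrelu : ∀ a b : ℝ, max 0 (a - b) = max a b - b := by
    intro a b
    rw [← max_sub_sub_right a b b, sub_self, max_comm]
  have hstc : ∀ t (i' : Fin nx), st t (Fin.castSucc i') = x i' := by
    intro t i'; rw [hst]; simp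
  have hstl : ∀ t, st t (Fin.last nx) = u t := by
    intro t; rw [hst]; simp
  -- first layer
  have hfirst : reluVec (affineMapVec
      (fun i => Fin.lastCases (fun j => A' 0 j - A' 1 j)
        (fun i' j => if j = i' then (1:ℝ) else 0) i)
      (Fin.lastCases (B' 0 - B' 1) (fun _ => 0)) x) = st 1 := by
    funext i
    induction i using Fin.lastCases with
    | last =>
      simp only [reluVec, affineMapVec, Fin.lastCases_last]
      rw [hstl]
      have : (∑ j, (A' 0 j - A' 1 j) * x j) + (B' 0 - B' 1) = ℓ 0 x - ℓ 1 x := by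
        simp only [hℓ, sub_mul, Finset.sum_sub_distrib]; ring
      have hM1 : Mx 1 = max (ℓ 0 x) (ℓ 1 x) := by
        have h2 := hMsucc 0
        rw [hM0] at h2
        exact h2
      rw [this, hrelu, show u 1 = Mx 1 - ℓ 1 x from rfl, hM1]
    | cast i' =>
      simp only [reluVec, affineMapVec, Fin.lastCases_castSucc]
      rw [hstc]
      have hs : (∑ j, (if j = i' then (1:ℝ) else 0) * x j) + 0 = x i' := by
        rw [add_zero]
        rw [Finset.sum_eq_single i']
        · simp
        · intro b _ hb; simp [hb]
        · intro hb; exact absurd (Finset.mem_univ i') hb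
      rw [hs]
      exact max_eq_right (hx i')
  -- the fold function
  set g : (Fin (nx + 1) → ℝ) → Fin (N - 1) → (Fin (nx + 1) → ℝ) := fun ξ l =>
    reluVec (affineMapVec
      (fun i => Fin.lastCases
        (Fin.lastCases (1:ℝ) (fun j' => A' ((l:ℕ) + 1) j' - A' ((l:ℕ) + 2) j'))
        (fun i' => fun j => if j = Fin.castSucc i' then (1:ℝ) else 0) i)
      (Fin.lastCases (B' ((l:ℕ) + 1) - B' ((l:ℕ) + 2)) (fun _ => 0)) ξ) with hg
  have hstep : ∀ l : Fin (N - 1), g (st ((l:ℕ) + 1)) l = st ((l:ℕ) + 2) := by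
    intro l
    funext i
    induction i using Fin.lastCases with
    | last =>
      simp only [hg, reluVec, affineMapVec, Fin.lastCases_last]
      rw [hstl]
      have hsum : (∑ j, (Fin.lastCases (motive := fun _ => ℝ) (1:ℝ)
            (fun j' => A' ((l:ℕ) + 1) j' - A' ((l:ℕ) + 2) j') j) * st ((l:ℕ) + 1) j)
          = (∑ j', (A' ((l:ℕ) + 1) j' - A' ((l:ℕ) + 2) j') * x j') + u ((l:ℕ) + 1) := by
        rw [Fin.sum_univ_castSucc]
        simp only [Fin.lastCases_castSucc, Fin.lastCases_last, one_mul]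
        rw [hstl]
        congr 1
        refine Finset.sum_congr rfl fun j' _ => ?_
        rw [hstc]
      rw [hsum]
      have hval : (∑ j', (A' ((l:ℕ) + 1) j' - A' ((l:ℕ) + 2) j') * x j') + u ((l:ℕ) + 1)
          + (B' ((l:ℕ) + 1) - B' ((l:ℕ) + 2)) = Mx ((l:ℕ) + 1) - ℓ ((l:ℕ) + 2) x := by
        rw [show u ((l:ℕ) + 1) = Mx ((l:ℕ) + 1) - ℓ ((l:ℕ) + 1) x from rfl]
        simp only [hℓ, sub_mul, Finset.sum_sub_distrib]
        ring
      rw [hval, hrelu, show u ((l:ℕ) + 2) = Mx ((l:ℕ) + 2) - ℓ ((l:ℕ) + 2) x from rfl,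
        show (l:ℕ) + 2 = ((l:ℕ) + 1) + 1 from rfl, hMsucc ((l:ℕ) + 1)]
    | cast i' =>
      simp only [hg, reluVec, affineMapVec, Fin.lastCases_castSucc]
      rw [hstc]
      have hs : (∑ j, (if j = Fin.castSucc i' then (1:ℝ) else 0) * st ((l:ℕ) + 1) j) + 0
          = x i' := by
        rw [add_zero, Finset.sum_eq_single (Fin.castSucc i')]
        · rw [if_pos rfl, one_mul, hstc]
        · intro b _ hb; simp [hb]
        · intro hb; exact absurd (Finset.mem_univ _) hb
      rw [hs]
      exact max_eq_right (hx i')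
  have hstep' : ∀ l : Fin (N - 1),
      g ((fun t => st (t + 1)) (l:ℕ)) l = (fun t => st (t + 1)) ((l:ℕ) + 1) := by
    intro l
    exact hstep l
  have hfold : List.foldl g (st 1) (List.finRange (N - 1)) = st N := by
    have h := foldl_finRange' (N - 1) g (fun t => st (t + 1)) hstep'
    beta_reduce at h
    have h2 : N - 1 + 1 = N := by omega
    rw [h2] at h
    exact h
  show affineMapVec _ _ (List.foldl _ _ _) 0 = _
  rw [show (List.foldl
      (fun ξ l => reluVec (affineMapVec
        ((fun l i => Fin.lastCases
          (Fin.lastCases (1:ℝ) (fun j' => A' ((l:ℕ) + 1) j' - A' ((l:ℕ) + 2) j'))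
          (fun i' => fun j => if j = Fin.castSucc i' then (1:ℝ) else 0) i : Fin (N-1) → Matrix (Fin (nx+1)) (Fin (nx+1)) ℝ) l)
        ((fun l => Fin.lastCases (B' ((l:ℕ) + 1) - B' ((l:ℕ) + 2)) (fun _ => 0) : Fin (N-1) → Fin (nx+1) → ℝ) l) ξ))
      (reluVec (affineMapVec
        (fun i => Fin.lastCases (fun j => A' 0 j - A' 1 j)
          (fun i' j => if j = i' then (1:ℝ) else 0) i)
        (Fin.lastCases (B' 0 - B' 1) (fun _ => 0)) x))
      (List.finRange (N - 1))) = st N from by rw [hfirst]; exact hfold]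
  -- output layer
  have hout : (∑ j, (Fin.lastCases (motive := fun _ => ℝ) (1:ℝ) (fun j' => A' N j') j)
      * st N j) + B' N = Mx N := by
    rw [Fin.sum_univ_castSucc]
    simp only [Fin.lastCases_castSucc, Fin.lastCases_last, one_mul]
    rw [hstl, show u N = Mx N - ℓ N x from rfl]
    have : (∑ j', A' N j' * st N (Fin.castSucc j')) = ∑ j', A' N j' * x j' := by
      refine Finset.sum_congr rfl fun j' _ => ?_; rw [hstc]
    rw [this, hℓ]
    ring
  show (∑ j, (Fin.lastCases (motive := fun _ => ℝ) (1:ℝ) (fun j' => A' N j') j) * st N j)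
      + B' N = _
  rw [hout]
  -- Mx N equals the sup over Fin N
  apply le_antisymm
  · refine Finset.sup'_le _ _ fun k hk => ?_
    exact Finset.le_sup' (fun k' : Fin N => (∑ j, A k' j * x j) + B k') (mem_univ (idx k))
  · refine Finset.sup'_le _ _ fun k _ => ?_
    have hik : idx (k:ℕ) = k := by
      rw [hidx]
      exact Fin.ext (by simp; omega)
    have : (∑ j, A k j * x j) + B k = ℓ (k:ℕ) x := by
      rw [hℓ]
      simp only [hA', hB', hik]
    rw [this]
    exact Finset.le_sup' (fun t => ℓ t x) (Finset.mem_range.mpr (by omega))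

lemma one_dim_pwa {r : ℕ} (T : Fin r → Set ℝ) (p q : Fin r → ℝ) (φ : ℝ → ℝ)
    (hT : ∀ i, IsClosed (T i))
    (hcover : ∀ t ∈ Icc (0:ℝ) 1, ∃ i, t ∈ T i)
    (hagree : ∀ i, ∀ t ∈ T i, t ∈ Icc (0:ℝ) 1 → φ t = p i + q i * t)
    (hφ : ContinuousOn φ (Icc 0 1)) :
    ∃ j, φ 0 ≤ p j ∧ p j + q j ≤ φ 1 := by
  classical
  have h01 : (0:ℝ) ∈ Icc (0:ℝ) 1 := ⟨le_refl _, zero_le_one⟩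
  have h11 : (1:ℝ) ∈ Icc (0:ℝ) 1 := ⟨zero_le_one, le_refl _⟩
  set G : Set ℝ := {t | t ∈ Icc (0:ℝ) 1 ∧ ∃ j, φ 0 ≤ p j ∧ p j + q j * t ≤ φ t} with hG
  have hG0 : (0:ℝ) ∈ G := by
    obtain ⟨i, hi⟩ := hcover 0 h01
    have := hagree i 0 hi h01
    exact ⟨h01, i, by rw [this]; simp, by rw [this]⟩
  have hGsub : G ⊆ Icc 0 1 := fun t ht => ht.1
  have hGclosed : IsClosed G := by
    have : G = ⋃ j : Fin r, {t | t ∈ Icc (0:ℝ) 1 ∧ φ 0 ≤ p j ∧ p j + q j * t ≤ φ t} := by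
      ext t
      simp only [hG, Set.mem_setOf_eq, Set.mem_iUnion]
      constructor
      · rintro ⟨ht, j, h1, h2⟩; exact ⟨j, ht, h1, h2⟩
      · rintro ⟨j, ht, h1, h2⟩; exact ⟨ht, j, h1, h2⟩
    rw [this]
    apply isClosed_iUnion_of_finite
    intro j
    by_cases hj : φ 0 ≤ p j
    · have : {t | t ∈ Icc (0:ℝ) 1 ∧ φ 0 ≤ p j ∧ p j + q j * t ≤ φ t}
          = Icc (0:ℝ) 1 ∩ (fun t => φ t - (p j + q j * t)) ⁻¹' (Ici 0) := by
        ext t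
        simp only [Set.mem_setOf_eq, Set.mem_inter_iff, Set.mem_preimage, Set.mem_Ici]
        constructor
        · rintro ⟨ht, _, h2⟩; exact ⟨ht, by linarith⟩
        · rintro ⟨ht, h2⟩; exact ⟨ht, hj, by linarith⟩
      rw [this]
      exact ContinuousOn.preimage_isClosed_of_isClosed
        (hφ.sub (Continuous.continuousOn (by continuity))) isClosed_Icc isClosed_Ici
    · have : {t | t ∈ Icc (0:ℝ) 1 ∧ φ 0 ≤ p j ∧ p j + q j * t ≤ φ t} = ∅ := by
        ext t; simp only [Set.mem_setOf_eq, Set.mem_empty_iff_false, iff_false]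
        rintro ⟨_, h1, _⟩; exact hj h1
      rw [this]; exact isClosed_empty
  have hGbdd : BddAbove G := ⟨1, fun t ht => ht.1.2⟩
  set s : ℝ := sSup G with hs
  have hsG : s ∈ G := hGclosed.csSup_mem ⟨0, hG0⟩ hGbdd
  have hs01 : s ∈ Icc (0:ℝ) 1 := hsG.1
  by_cases hs1 : s = 1
  · obtain ⟨j, hj0, hj1⟩ := hsG.2
    rw [hs1] at hj1
    exact ⟨j, hj0, by linarith⟩
  have hslt : s < 1 := lt_of_le_of_ne hs01.2 hs1
  exfalso
  obtain ⟨j, hj0, hjs⟩ := hsG.2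
  rcases lt_or_eq_of_le hjs with hlt | heq
  -- Case 1: strict inequality at s, extend by continuity
  · have hψ : ContinuousOn (fun t => φ t - (p j + q j * t)) (Icc 0 1) :=
      hφ.sub (Continuous.continuousOn (by continuity))
    have hψs : 0 < φ s - (p j + q j * s) := by linarith
    have hev : (fun t => φ t - (p j + q j * t)) ⁻¹' (Ioi 0) ∈ nhdsWithin s (Icc (0:ℝ) 1) :=
      (hψ s hs01) (Ioi_mem_nhds hψs)
    rw [mem_nhdsWithin] at hev
    obtain ⟨U, hUopen, hsU, hUsub⟩ := hev
    obtain ⟨δ, hδpos, hball⟩ := Metric.isOpen_iff.mp hUopen s hsU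
    set t0 : ℝ := min 1 (s + δ / 2) with ht0
    have ht0gt : s < t0 := by
      apply lt_min hslt
      linarith
    have ht0Icc : t0 ∈ Icc (0:ℝ) 1 := ⟨le_trans hs01.1 (le_of_lt ht0gt), min_le_left _ _⟩
    have ht0U : t0 ∈ U := by
      apply hball
      rw [Metric.mem_ball, Real.dist_eq, abs_sub_lt_iff]
      constructor
      · have : t0 ≤ s + δ / 2 := min_le_right _ _
        linarith
      · linarith
    have ht0pos : 0 < φ t0 - (p j + q j * t0) := hUsub ⟨ht0U, ht0Icc⟩
    have : t0 ∈ G := ⟨ht0Icc, j, hj0, by linarith⟩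
    have := le_csSup hGbdd this
    linarith
  -- Case 2: equality at s
  · have hrne : Nonempty (Fin r) := ⟨(hcover 0 h01).choose⟩
    set Kpred : Fin r → Prop := fun k => ∀ ε > 0, ∃ t ∈ T k, s < t ∧ t ≤ s + ε with hKp
    have hE : ∀ k, ∃ ε, 0 < ε ∧ (¬ Kpred k → ∀ t ∈ T k, ¬(s < t ∧ t ≤ s + ε)) := by
      intro k
      by_cases hk : Kpred k
      · exact ⟨1, one_pos, fun h => absurd hk h⟩
      · simp only [hKp] at hk
        push_neg at hk
        obtain ⟨ε, hεpos, hε⟩ := hk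
        refine ⟨ε, hεpos, fun _ t ht hc => ?_⟩
        obtain ⟨h1, h2⟩ := hc
        exact absurd h2 (not_le.mpr (hε t ht h1))
    choose E hEpos hEprop using hE
    set δ : ℝ := min (1 - s) ((univ : Finset (Fin r)).inf' univ_nonempty E) with hδ
    have hδpos : 0 < δ := by
      apply lt_min (by linarith)
      rw [Finset.lt_inf'_iff]
      exact fun k _ => hEpos k
    have hδk : ∀ k, δ ≤ E k := fun k =>
      le_trans (min_le_right _ _) (Finset.inf'_le E (mem_univ k))
    have hcov2 : ∀ t, s < t → t ≤ s + δ → ∃ k, Kpred k ∧ t ∈ T k := by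
      intro t h1 h2
      have htIcc : t ∈ Icc (0:ℝ) 1 := by
        constructor
        · linarith [hs01.1]
        · have : δ ≤ 1 - s := min_le_left _ _
          linarith
      obtain ⟨k, hk⟩ := hcover t htIcc
      by_cases hKk : Kpred k
      · exact ⟨k, hKk, hk⟩
      · exact absurd ⟨h1, le_trans h2 (by linarith [hδk k])⟩ (hEprop k hKk t hk)
    have hsT : ∀ k, Kpred k → s ∈ T k := by
      intro k hk
      refine (hT k).closure_subset ?_
      rw [Metric.mem_closure_iff]
      intro ε hε
      obtain ⟨t, ht, h1, h2⟩ := hk (ε / 2) (by linarith)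
      exact ⟨t, ht, by rw [Real.dist_eq, abs_sub_lt_iff]; constructor <;> linarith⟩
    have hsIcc2 : ∀ k, Kpred k → φ s = p k + q k * s := by
      intro k hk
      exact hagree k s (hsT k hk) hs01
    -- K is nonempty
    have hKF : ((univ : Finset (Fin r)).filter Kpred).Nonempty := by
      obtain ⟨k, hk, _⟩ := hcov2 (s + δ) (by linarith) (le_refl _)
      exact ⟨k, Finset.mem_filter.mpr ⟨mem_univ k, hk⟩⟩
    obtain ⟨ks, hksmem, hksmin⟩ := Finset.exists_min_image _ q hKF
    have hksK : Kpred ks := (Finset.mem_filter.mp hksmem).2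
    -- the witness
    set w : Fin r := if q ks ≤ q j then ks else j with hw
    have hw0 : φ 0 ≤ p w := by
      rw [hw]
      split_ifs with hqq
      · have h1 : p ks + q ks * s = φ s := (hsIcc2 ks hksK).symm
        have h2 : q ks * s ≤ q j * s := mul_le_mul_of_nonneg_right hqq hs01.1
        linarith
      · exact hj0
    have hws : p w + q w * s = φ s := by
      rw [hw]; split_ifs
      · exact (hsIcc2 ks hksK).symm
      · exact heq
    have hwq : ∀ k, Kpred k → q w ≤ q k := by
      intro k hk
      have hkmem : k ∈ (univ : Finset (Fin r)).filter Kpred :=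
        Finset.mem_filter.mpr ⟨mem_univ k, hk⟩
      rw [hw]; split_ifs with hqq
      · exact hksmin k hkmem
      · exact le_trans (le_of_lt (lt_of_not_ge hqq)) (hksmin k hkmem)
    -- s + δ ∈ G
    have ht0G : s + δ ∈ G := by
      have hIcc : s + δ ∈ Icc (0:ℝ) 1 := by
        constructor
        · linarith [hs01.1]
        · have : δ ≤ 1 - s := min_le_left _ _
          linarith
      refine ⟨hIcc, w, hw0, ?_⟩
      obtain ⟨k, hkK, hkT⟩ := hcov2 (s + δ) (by linarith) (le_refl _)
      have hφt : φ (s + δ) = p k + q k * (s + δ) := hagree k (s + δ) hkT hIcc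
      have hpk : p k + q k * s = φ s := (hsIcc2 k hkK).symm
      have hqwk : q w ≤ q k := hwq k hkK
      nlinarith [hδpos]
    have := le_csSup hGbdd ht0G
    linarith

-- two-point lemma
lemma two_point {nx r : ℕ} (f : (Fin nx → ℝ) → ℝ) (R : Fin r → Set (Fin nx → ℝ))
    (aa : Fin r → Fin nx → ℝ) (cc : Fin r → ℝ)
    (hclosed : ∀ i, IsClosed (R i))
    (hcover : (⋃ i, R i) = unitCube nx)
    (hagree : ∀ i, ∀ x ∈ R i, f x = (∑ j, aa i j * x j) + cc i)
    (hcont : ContinuousOn f (unitCube nx))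
    (x y : Fin nx → ℝ) (hx : x ∈ unitCube nx) (hy : y ∈ unitCube nx) :
    ∃ j : Fin r, f x ≤ (∑ jj, aa j jj * x jj) + cc j
      ∧ (∑ jj, aa j jj * y jj) + cc j ≤ f y := by
  classical
  set γ : ℝ → (Fin nx → ℝ) := fun t i => (1 - t) * x i + t * y i with hγ
  have hγcont : Continuous γ := by
    apply continuous_pi
    intro i
    continuity
  have hγcube : ∀ t ∈ Icc (0:ℝ) 1, γ t ∈ unitCube nx := by
    intro t ht i
    obtain ⟨hx0, hx1⟩ := hx i
    obtain ⟨hy0, hy1⟩ := hy i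
    obtain ⟨ht0, ht1⟩ := ht
    constructor
    · have h1 : 0 ≤ (1 - t) * x i := mul_nonneg (by linarith) hx0
      have h2 : 0 ≤ t * y i := mul_nonneg ht0 hy0
      simp only [hγ]
      linarith
    · have h1 : (1 - t) * x i ≤ (1 - t) * 1 := mul_le_mul_of_nonneg_left hx1 (by linarith)
      have h2 : t * y i ≤ t * 1 := mul_le_mul_of_nonneg_left hy1 ht0
      simp only [hγ]
      linarith
  have hγ0 : γ 0 = x := by funext i; simp [hγ]
  have hγ1 : γ 1 = y := by funext i; simp [hγ]
  set T : Fin r → Set ℝ := fun i => Icc (0:ℝ) 1 ∩ γ ⁻¹' (R i) with hT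
  set p : Fin r → ℝ := fun i => (∑ jj, aa i jj * x jj) + cc i with hp
  set q : Fin r → ℝ := fun i => ((∑ jj, aa i jj * y jj) + cc i) - p i with hq
  have hTclosed : ∀ i, IsClosed (T i) :=
    fun i => IsClosed.inter isClosed_Icc ((hclosed i).preimage hγcont)
  have hcover' : ∀ t ∈ Icc (0:ℝ) 1, ∃ i, t ∈ T i := by
    intro t ht
    have : γ t ∈ ⋃ i, R i := hcover ▸ hγcube t ht
    obtain ⟨i, hi⟩ := Set.mem_iUnion.mp this
    exact ⟨i, ht, hi⟩
  have hagree' : ∀ i, ∀ t ∈ T i, t ∈ Icc (0:ℝ) 1 → (f ∘ γ) t = p i + q i * t := by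
    intro i t hti _
    have h1 : f (γ t) = (∑ jj, aa i jj * γ t jj) + cc i := hagree i (γ t) hti.2
    have h2 : (∑ jj, aa i jj * γ t jj)
        = (1 - t) * (∑ jj, aa i jj * x jj) + t * (∑ jj, aa i jj * y jj) := by
      rw [Finset.mul_sum, Finset.mul_sum, ← Finset.sum_add_distrib]
      refine Finset.sum_congr rfl fun jj _ => ?_
      simp only [hγ]
      ring
    simp only [Function.comp_apply, h1, h2, hp, hq]
    ring
  have hφ : ContinuousOn (f ∘ γ) (Icc 0 1) :=
    hcont.comp hγcont.continuousOn (fun t ht => hγcube t ht)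
  obtain ⟨j, hj0, hj1⟩ := one_dim_pwa T p q (f ∘ γ) hTclosed hcover' hagree' hφ
  refine ⟨j, ?_, ?_⟩
  · have : (f ∘ γ) 0 = f x := by rw [Function.comp_apply, hγ0]
    rw [this] at hj0
    exact hj0
  · have : (f ∘ γ) 1 = f y := by rw [Function.comp_apply, hγ1]
    rw [this] at hj1
    have : p j + q j = (∑ jj, aa j jj * y jj) + cc j := by simp [hq]
    rw [this] at hj1
    exact hj1

section Assembly

variable {nx r : ℕ} (f : (Fin nx → ℝ) → ℝ) (ℓ : Fin r → (Fin nx → ℝ) → ℝ)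

abbrev Tau : Type := {T : Finset (Fin r) // ∀ y ∈ unitCube nx, ∃ j ∈ T, ℓ j y ≤ f y}

abbrev ChoT : Type := ∀ T : Tau f ℓ, {j : Fin r // j ∈ T.1}

end Assembly


end AuxNN

/-- a nonnegative continuous PWA function on the unit cube is the difference
of two ReLU networks of width `nx + 1`. -/
theorem pwa_diff_of_relu_nets (nx : ℕ) (f : (Fin nx → ℝ) → ℝ)
    (hcont : ContinuousOn f (unitCube nx))
    (hpwa : IsPWAOnScalar (unitCube nx) f)
    (hnonneg : ∀ x ∈ unitCube nx, 0 ≤ f x) :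
    ∃ (rγ rη : ℕ), 1 ≤ rγ ∧ 1 ≤ rη ∧
      ∃ (θγ : ReLUNetParams nx 1 (nx + 1) rγ) (θη : ReLUNetParams nx 1 (nx + 1) rη),
        ∀ x ∈ unitCube nx, f x = θγ.eval x 0 - θη.eval x 0 := by
  classical
  obtain ⟨r, R, aa, cc, hpoly, hdisj, hcover, haff⟩ := hpwa
  set ℓ : Fin r → (Fin nx → ℝ) → ℝ := fun i x => (∑ j, aa i j * x j) + cc i with hℓ
  have hclosed : ∀ i, IsClosed (R i) := by
    intro i
    obtain ⟨m, Z, z, hZ⟩ := hpoly i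
    rw [hZ]
    have he : {x : Fin nx → ℝ | ∀ k, (∑ j, Z k j * x j) ≤ z k}
        = ⋂ k, {x : Fin nx → ℝ | (∑ j, Z k j * x j) ≤ z k} := by
      ext v; simp [Set.mem_iInter]
    rw [he]
    refine isClosed_iInter fun k => isClosed_le ?_ continuous_const
    exact continuous_finset_sum _ fun j _ => continuous_const.mul (continuous_apply j)
  have hx0 : (fun _ => (0:ℝ)) ∈ unitCube nx := fun i => ⟨le_refl _, zero_le_one⟩
  have hTset : ∀ x ∈ unitCube nx, ∀ y ∈ unitCube nx,
      ∃ j ∈ (univ.filter (fun j => f x ≤ ℓ j x)), ℓ j y ≤ f y := by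
    intro x hx y hy
    obtain ⟨j, hj1, hj2⟩ := two_point f R aa cc hclosed hcover haff hcont x y hx hy
    exact ⟨j, Finset.mem_filter.mpr ⟨mem_univ j, hj1⟩, hj2⟩
  haveI hneτ : Nonempty (Tau f ℓ) :=
    ⟨⟨univ.filter (fun j => f (fun _ => 0) ≤ ℓ j (fun _ => 0)), hTset _ hx0⟩⟩
  have hτne : (univ : Finset (Tau f ℓ)).Nonempty := univ_nonempty_iff.mpr inferInstance
  have hTne : ∀ T : Tau f ℓ, T.1.Nonempty := by
    intro T; obtain ⟨j, hj, _⟩ := T.2 _ hx0; exact ⟨j, hj⟩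
  have hkey : ∀ x ∈ unitCube nx,
      f x = (univ : Finset (Tau f ℓ)).sup' hτne
        (fun T => T.1.inf' (hTne T) (fun j => ℓ j x)) := by
    intro x hx
    apply le_antisymm
    · refine le_trans ?_ (Finset.le_sup'
        (fun T : Tau f ℓ => T.1.inf' (hTne T) (fun j => ℓ j x))
        (mem_univ (⟨univ.filter (fun j => f x ≤ ℓ j x), hTset x hx⟩ : Tau f ℓ)))
      apply Finset.le_inf'
      intro j hj
      exact (Finset.mem_filter.mp hj).2
    · apply Finset.sup'_le
      intro T _
      obtain ⟨j, hj, hle⟩ := T.2 x hx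
      exact le_trans (Finset.inf'_le _ hj) hle
  set G : Tau f ℓ → (Fin nx → ℝ) → ℝ := fun T x => T.1.sup' (hTne T) (fun j => -ℓ j x) with hG
  haveI : ∀ T : Tau f ℓ, Nonempty {j : Fin r // j ∈ T.1} :=
    fun T => ⟨⟨(hTne T).choose, (hTne T).choose_spec⟩⟩
  haveI : Nonempty (ChoT f ℓ) := ⟨fun T => Classical.arbitrary _⟩
  have hChone : (univ : Finset (ChoT f ℓ)).Nonempty := univ_nonempty_iff.mpr inferInstance
  have hinfG : ∀ (T : Tau f ℓ) (x : Fin nx → ℝ),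
      T.1.inf' (hTne T) (fun j => ℓ j x) = -G T x := by
    intro T x
    rw [hG]
    simp only []
    rw [sup'_neg_eq, neg_neg]
  have hsumsup : ∀ (S : Finset (Tau f ℓ)) (x : Fin nx → ℝ),
      (∑ T ∈ S, G T x)
        = (univ : Finset (ChoT f ℓ)).sup' hChone (fun c => ∑ T ∈ S, -ℓ (c T).1 x) := by
    intro S x
    apply le_antisymm
    · have hc : ∀ T : Tau f ℓ, ∃ jj : {j : Fin r // j ∈ T.1}, G T x = -ℓ jj.1 x := by
        intro T
        obtain ⟨j, hj, he⟩ := Finset.exists_mem_eq_sup' (hTne T) (fun j => -ℓ j x)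
        exact ⟨⟨j, hj⟩, he⟩
      choose c hcs using hc
      refine le_trans (le_of_eq (Finset.sum_congr rfl fun T _ => hcs T)) ?_
      exact Finset.le_sup' (fun c' : ChoT f ℓ => ∑ T ∈ S, -ℓ (c' T).1 x) (mem_univ c)
    · apply Finset.sup'_le
      intro c _
      exact Finset.sum_le_sum fun T _ => Finset.le_sup' (fun j => -ℓ j x) (c T).2
  have haffine : ∀ (S : Finset (Tau f ℓ)) (c : ChoT f ℓ) (x : Fin nx → ℝ),
      (∑ T ∈ S, -ℓ (c T).1 x)
        = (∑ j, (∑ T ∈ S, -aa (c T).1 j) * x j) + (∑ T ∈ S, -cc (c T).1) := by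
    intro S c x
    simp only [hℓ, neg_add]
    rw [Finset.sum_add_distrib]
    congr 1
    calc (∑ T ∈ S, -(∑ j, aa (c T).1 j * x j))
        = ∑ T ∈ S, ∑ j, -(aa (c T).1 j * x j) := by
          refine Finset.sum_congr rfl fun T _ => ?_
          rw [← Finset.sum_neg_distrib]
    _ = ∑ j, ∑ T ∈ S, -(aa (c T).1 j * x j) := Finset.sum_comm
    _ = ∑ j, (∑ T ∈ S, -aa (c T).1 j) * x j := by
          refine Finset.sum_congr rfl fun j _ => ?_
          rw [Finset.sum_mul]
          exact Finset.sum_congr rfl fun T _ => by ring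
  have hPQ : ∀ x : Fin nx → ℝ,
      (univ : Finset (Tau f ℓ)).sup' hτne (fun T => -G T x)
        = (univ : Finset (Tau f ℓ)).sup' hτne (fun T₀ => ∑ T ∈ univ.erase T₀, G T x)
          - (∑ T ∈ (univ : Finset (Tau f ℓ)), G T x) := by
    intro x
    have h1 : (univ : Finset (Tau f ℓ)).sup' hτne (fun T₀ => ∑ T ∈ univ.erase T₀, G T x)
        = (univ : Finset (Tau f ℓ)).sup' hτne
            (fun T₀ => (∑ T ∈ (univ : Finset (Tau f ℓ)), G T x) - G T₀ x) := by
      refine Finset.sup'_congr hτne rfl fun T₀ _ => ?_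
      exact Finset.sum_erase_eq_sub (mem_univ T₀)
    rw [h1, sup'_const_sub univ hτne _ (fun T => G T x),
      sup'_neg_eq univ hτne (fun T => G T x)]
    ring
  -- the η network (for Q = ∑ G)
  obtain ⟨rη, hrη, θη, hθη⟩ := exists_relu_net_sup nx (Fintype.card (ChoT f ℓ))
    Fintype.card_pos
    (fun k j => ∑ T ∈ (univ : Finset (Tau f ℓ)),
      -aa (((Fintype.equivFin (ChoT f ℓ)).symm k) T).1 j)
    (fun k => ∑ T ∈ (univ : Finset (Tau f ℓ)),
      -cc (((Fintype.equivFin (ChoT f ℓ)).symm k) T).1)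
  -- the γ network (for P)
  obtain ⟨rγ, hrγ, θγ, hθγ⟩ := exists_relu_net_sup nx (Fintype.card (Tau f ℓ × ChoT f ℓ))
    Fintype.card_pos
    (fun k j => ∑ T ∈ (univ.erase ((Fintype.equivFin (Tau f ℓ × ChoT f ℓ)).symm k).1),
      -aa ((((Fintype.equivFin (Tau f ℓ × ChoT f ℓ)).symm k).2 T).1) j)
    (fun k => ∑ T ∈ (univ.erase ((Fintype.equivFin (Tau f ℓ × ChoT f ℓ)).symm k).1),
      -cc ((((Fintype.equivFin (Tau f ℓ × ChoT f ℓ)).symm k).2 T).1))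
  refine ⟨rγ, rη, hrγ, hrη, θγ, θη, ?_⟩
  intro x hx
  have hxpos : ∀ i, 0 ≤ x i := fun i => (hx i).1
  -- evaluate η net
  have hη : θη.eval x 0 = ∑ T ∈ (univ : Finset (Tau f ℓ)), G T x := by
    rw [hθη x hxpos]
    have h2 := sup'_equiv_fin (Fintype.card_pos) (Fintype.equivFin (ChoT f ℓ))
      (fun c : ChoT f ℓ => (∑ j, (∑ T ∈ (univ : Finset (Tau f ℓ)), -aa (c T).1 j) * x j)
        + (∑ T ∈ (univ : Finset (Tau f ℓ)), -cc (c T).1))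
    rw [hsumsup univ x]
    refine Eq.trans ?_ (h2.trans ?_)
    · rfl
    · refine Finset.sup'_congr hChone rfl fun c _ => ?_
      exact (haffine univ c x).symm
  -- evaluate γ net
  have hγn : θγ.eval x 0 = (univ : Finset (Tau f ℓ)).sup' hτne
      (fun T₀ => ∑ T ∈ univ.erase T₀, G T x) := by
    rw [hθγ x hxpos]
    have h2 := sup'_equiv_fin (Fintype.card_pos) (Fintype.equivFin (Tau f ℓ × ChoT f ℓ))
      (fun pc : Tau f ℓ × ChoT f ℓ => (∑ j, (∑ T ∈ univ.erase pc.1, -aa (pc.2 T).1 j) * x j)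
        + (∑ T ∈ univ.erase pc.1, -cc (pc.2 T).1))
    have h3 := sup'_prod_eq (κ₁ := Tau f ℓ) (κ₂ := ChoT f ℓ)
      (fun pc => (∑ j, (∑ T ∈ univ.erase pc.1, -aa (pc.2 T).1 j) * x j)
        + (∑ T ∈ univ.erase pc.1, -cc (pc.2 T).1))
    refine Eq.trans ?_ ((h2.trans h3).trans ?_)
    · rfl
    · refine Finset.sup'_congr hτne rfl fun T₀ _ => ?_
      have h4 : ∀ c : ChoT f ℓ,
          ((∑ j, (∑ T ∈ univ.erase T₀, -aa (c T).1 j) * x j)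
            + (∑ T ∈ univ.erase T₀, -cc (c T).1)) = ∑ T ∈ univ.erase T₀, -ℓ (c T).1 x :=
        fun c => (haffine (univ.erase T₀) c x).symm
      rw [Finset.sup'_congr hChone rfl fun c _ => h4 c]
      exact (hsumsup (univ.erase T₀) x).symm
  rw [hη, hγn, ← hPQ x, hkey x hx]
  exact Finset.sup'_congr hτne rfl fun T _ => hinfG T x
end

section
/- Let K : [0,1]^{n_x} → ℝ^{n_u} be a continuous piecewise affine function (e.g., an explicit MPC law) all of whose components are nonnegative on [0,1]^{n_x}. Then there exist, for each i = 1, …, n_u, depths r_{γ,i}, r_{η,i} ≥ 1 and parameters θ_{γ,i}, θ_{η,i} of ReLU networks of width w = n_x + 1 and scalar output, such that for all x ∈ [0,1]^{n_x} and each i = 1, …, n_u, the i-th component of K satisfies K_i(x) = N(x;θ_{γ,i}, w, r_{γ,i}) − N(x;θ_{η,i}, w, r_{η,i}); that is, the vector of 2 n_u deep ReLU networks exactly represents K. -/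
open Finset Matrix

lemma foldl_relu_invariant {σ : Type*} : ∀ (M : ℕ) (step : Fin M → σ → σ) (Φ : ℕ → σ),
    (∀ l : Fin M, step l (Φ (l : ℕ)) = Φ ((l : ℕ) + 1)) →
    (List.finRange M).foldl (fun s l => step l s) (Φ 0) = Φ M := by
  intro M
  induction M with
  | zero => intro step Φ h; simp
  | succ m ih =>
    intro step Φ h
    rw [List.finRange_succ]
    simp only [List.foldl_cons, List.foldl_map]
    have h0 : step 0 (Φ 0) = Φ 1 := h 0
    rw [h0]
    exact ih (fun l s => step l.succ s) (fun t => Φ (t + 1))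
      (fun l => by simpa [add_comm, add_assoc, add_left_comm] using h l.succ)

lemma sup'_add_const {ι : Type*} (s : Finset ι) (h : s.Nonempty) (f : ι → ℝ) (C : ℝ) :
    s.sup' h (fun i => f i + C) = s.sup' h f + C := by
  apply le_antisymm
  · exact Finset.sup'_le _ _ fun i hi => by linarith [Finset.le_sup' f hi]
  · have : s.sup' h f ≤ s.sup' h (fun i => f i + C) - C :=
      Finset.sup'_le _ _ fun i hi => le_sub_iff_add_le.mpr (Finset.le_sup' (fun i => f i + C) hi)
    linarith

lemma max_relu_helper (p u : ℝ) (hu : 0 ≤ u) : max 0 (max 0 (p - u) + u) = max p u := by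
  rcases le_total p u with h | h
  · rw [max_eq_left (by linarith : p - u ≤ 0), zero_add, max_eq_right hu, max_eq_right h]
  · rw [max_eq_right (by linarith : (0:ℝ) ≤ p - u), sub_add_cancel,
      max_eq_right (le_trans hu h), max_eq_left h]

lemma maxaffine_network (nx n : ℕ) (hn : 0 < n) (a : Fin n → Fin nx → ℝ) (c : Fin n → ℝ) :
    ∃ (L : ℕ), 1 ≤ L ∧ ∃ θ : ReLUNetParams nx 1 (nx + 1) L,
      ∀ x ∈ unitCube nx, θ.eval x 0 =
        Finset.univ.sup' ⟨⟨0, hn⟩, Finset.mem_univ _⟩ (fun k => (∑ j, a k j * x j) + c k) := by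
  classical
  refine ⟨2 * n - 1, by omega, ?_⟩
  set C : ℝ := ∑ k : Fin n, ((∑ j, |a k j|) + |c k|) with hCdef
  have hML : 2 * n - 1 - 1 = 2 * n - 2 := by omega
  set k0 : Fin n := ⟨0, hn⟩ with hk0
  have hkf : ∀ l : Fin (2 * n - 1 - 1), (l : ℕ) / 2 + 1 < n := fun l => by
    have := l.isLt; omega
  set kf : Fin (2 * n - 1 - 1) → Fin n := fun l => ⟨(l : ℕ) / 2 + 1, hkf l⟩ with hkfdef
  set θ : ReLUNetParams nx 1 (nx + 1) (2 * n - 1) :=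
    { W1 := fun i => Fin.lastCases (fun j => a k0 j) (fun i' j => if i' = j then 1 else 0) i
      b1 := Fin.lastCases (c k0 + C) (fun _ => 0)
      W := fun l i => Fin.lastCases
        (Fin.lastCases (1 : ℝ)
          (fun j' => if (l : ℕ) % 2 = 0 then -(a (kf l) j') else a (kf l) j'))
        (fun i' => Fin.lastCases (0 : ℝ) (fun j' => if i' = j' then 1 else 0)) i
      b := fun l => Fin.lastCases
        (if (l : ℕ) % 2 = 0 then -(c (kf l) + C) else c (kf l) + C) (fun _ => 0)
      Wout := fun _ => Fin.lastCases (1 : ℝ) (fun _ => 0)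
      bout := fun _ => -C } with hθ
  refine ⟨θ, ?_⟩
  intro x hx
  set ℓA : Fin n → ℝ := fun k => (∑ j, a k j * x j) + c k with hℓA
  have hxj : ∀ j, 0 ≤ x j ∧ x j ≤ 1 := hx
  have hC : ∀ k, 0 ≤ ℓA k + C := by
    intro k
    have h1 : |ℓA k| ≤ (∑ j, |a k j|) + |c k| := by
      have : |∑ j, a k j * x j| ≤ ∑ j, |a k j| := by
        refine le_trans (Finset.abs_sum_le_sum_abs _ _) (Finset.sum_le_sum fun j _ => ?_)
        rw [abs_mul]
        exact mul_le_of_le_one_right (abs_nonneg _) (abs_le.mpr ⟨by linarith [(hxj j).1], (hxj j).2⟩)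
      calc |ℓA k| ≤ |∑ j, a k j * x j| + |c k| := abs_add_le _ _
        _ ≤ (∑ j, |a k j|) + |c k| := by linarith
    have h2 : (∑ j, |a k j|) + |c k| ≤ C := by
      refine Finset.single_le_sum (f := fun k => (∑ j, |a k j|) + |c k|) ?_ (Finset.mem_univ k)
      intro i _
      positivity
    have := abs_le.mp h1
    linarith [this.1]
  -- partial maxima
  set P : Fin n → ℝ := fun k => (Finset.Iic k).sup' Finset.nonempty_Iic (fun j => ℓA j + C)
    with hPdef
  have hPk : ∀ k, ℓA k + C ≤ P k := fun k =>
    Finset.le_sup' (f := fun j => ℓA j + C) (Finset.mem_Iic.mpr le_rfl)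
  have hP0 : ∀ k, 0 ≤ P k := fun k => le_trans (hC k) (hPk k)
  have hPsucc : ∀ (t : ℕ) (h : t + 1 < n),
      P ⟨t + 1, h⟩ = max (P ⟨t, by omega⟩) (ℓA ⟨t + 1, h⟩ + C) := by
    intro t h
    have hins : Finset.Iic (⟨t + 1, h⟩ : Fin n)
        = insert (⟨t + 1, h⟩ : Fin n) (Finset.Iic (⟨t, by omega⟩ : Fin n)) := by
      ext j
      simp only [Finset.mem_Iic, Finset.mem_insert, Fin.le_def, Fin.ext_iff]
      omega
    rw [hPdef]
    simp only [hins]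
    rw [Finset.sup'_insert]
    exact max_comm _ _
  -- index clamp
  set idx : ℕ → Fin n := fun m => ⟨min (m / 2) (n - 1), by omega⟩ with hidx
  set V : ℕ → ℝ := fun m =>
    if m % 2 = 0 then P (idx m) else max 0 (P (idx (m - 1)) - (ℓA (idx (m + 1)) + C)) with hV
  set Φ : ℕ → (Fin (nx + 1) → ℝ) := fun m => Fin.lastCases (V m) (fun i' => x i') with hΦ
  have hbase : reluVec (affineMapVec θ.W1 θ.b1 x) = Φ 0 := by
    funext i
    induction i using Fin.lastCases with
    | last =>
      simp only [reluVec, affineMapVec, hθ, hΦ, Fin.lastCases_last]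
      have : V 0 = ℓA k0 + C := by
        have hIic : Finset.Iic (⟨0, hn⟩ : Fin n) = {(⟨0, hn⟩ : Fin n)} := by
          ext j; simp [Finset.mem_Iic, Fin.le_def, Fin.ext_iff]
        simp only [hV, hidx, Nat.zero_mod, if_pos rfl]
        have : (⟨min (0/2) (n-1), by omega⟩ : Fin n) = ⟨0, hn⟩ := by
          ext; simp
        rw [this, hPdef]
        simp only [hIic, Finset.sup'_singleton]
        rfl
      rw [this, ← add_assoc]
      exact max_eq_right (by have := hC k0; simp only [hℓA] at this; linarith)
    | cast i' =>
      simp only [reluVec, affineMapVec, hθ, hΦ, Fin.lastCases_castSucc]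
      have hsum : (∑ j, (if i' = j then (1:ℝ) else 0) * x j) + 0 = x i' := by
        simp [ite_mul, Finset.sum_ite_eq]
      rw [hsum]
      exact max_eq_right (hxj i').1
  have hstep : ∀ l : Fin (2 * n - 1 - 1),
      (fun s => reluVec (affineMapVec (θ.W l) (θ.b l) s)) (Φ (l : ℕ)) = Φ ((l : ℕ) + 1) := by
    intro l
    have hl2 : (l : ℕ) < 2 * n - 2 := by have := l.isLt; omega
    funext i
    induction i using Fin.lastCases with
    | cast i' =>
      simp only [reluVec, affineMapVec, hθ, hΦ, Fin.lastCases_castSucc]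
      have hsum : (∑ j, (Fin.lastCases (0:ℝ) (fun j' => if i' = j' then 1 else 0) j)
          * (Fin.lastCases (V (l:ℕ)) (fun i'' => x i'') j : ℝ)) = x i' := by
        rw [Fin.sum_univ_castSucc]
        simp [ite_mul, Finset.sum_ite_eq]
      rw [hsum, add_zero]
      exact max_eq_right (hxj i').1
    | last =>
      simp only [reluVec, affineMapVec, hθ, hΦ, Fin.lastCases_last]
      rw [Fin.sum_univ_castSucc]
      simp only [Fin.lastCases_castSucc, Fin.lastCases_last]
      rcases Nat.even_or_odd (l : ℕ) with he | ho
      · -- even layer: A-step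
        have hm : (l:ℕ) % 2 = 0 := Nat.even_iff.mp he
        have hm1 : ((l:ℕ) + 1) % 2 = 1 := by omega
        have hVl : V (l:ℕ) = P (idx (l:ℕ)) := by simp only [hV, hm, reduceIte]
        have hVl1 : V ((l:ℕ) + 1)
            = max 0 (P (idx (l:ℕ)) - (ℓA (kf l) + C)) := by
          simp only [hV, hm1, one_ne_zero, ite_false, reduceIte, Nat.add_sub_cancel]
          have hkk : idx ((l:ℕ) + 1 + 1) = kf l := by
            have := l.isLt
            simp only [hidx, hkfdef, Fin.ext_iff]
            omega
          rw [hkk]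
        simp only [hm, reduceIte]
        rw [hVl, hVl1]
        congr 1
        simp only [hℓA, neg_mul, Finset.sum_neg_distrib]
        ring
      · -- odd layer: B-step
        have hm : (l:ℕ) % 2 = 1 := Nat.odd_iff.mp ho
        have hmne : ¬ ((l:ℕ) % 2 = 0) := by omega
        have hm1 : ((l:ℕ) + 1) % 2 = 0 := by omega
        have hlt : (l:ℕ) / 2 + 1 < n := hkf l
        have hVl : V (l:ℕ) = max 0 (P (idx ((l:ℕ) - 1)) - (ℓA (kf l) + C)) := by
          simp only [hV, hm, one_ne_zero, ite_false, reduceIte]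
          have hkk : idx ((l:ℕ) + 1) = kf l := by
            simp only [hidx, hkfdef, Fin.ext_iff]
            omega
          rw [hkk]
        have hVl1 : V ((l:ℕ) + 1) = max (P (idx ((l:ℕ) - 1))) (ℓA (kf l) + C) := by
          simp only [hV, hm1, reduceIte]
          have hkk : idx ((l:ℕ) + 1) = kf l := by
            simp only [hidx, hkfdef, Fin.ext_iff]
            omega
          rw [hkk]
          have hkf2 : kf l = ⟨(l:ℕ)/2 + 1, hlt⟩ := rfl
          have hidxm : idx ((l:ℕ) - 1) = ⟨(l:ℕ)/2, by omega⟩ := by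
            have := Nat.odd_iff.mp ho
            simp only [hidx, Fin.ext_iff]
            omega
          rw [hkf2, hidxm, hPsucc ((l:ℕ)/2) hlt]
        simp only [hm, one_ne_zero, ite_false, reduceIte]
        rw [hVl, hVl1]
        rw [← max_relu_helper (P (idx ((l:ℕ) - 1))) (ℓA (kf l) + C) (hC _)]
        congr 1
        simp only [hℓA]
        ring
  have hfold : (List.finRange (2*n-1-1)).foldl
      (fun ξ l => reluVec (affineMapVec (θ.W l) (θ.b l) ξ)) (Φ 0) = Φ (2*n-1-1) :=
    foldl_relu_invariant _ (fun l s => reluVec (affineMapVec (θ.W l) (θ.b l) s)) Φ hstep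
  rw [ReLUNetParams.eval, hbase, hfold]
  have hM0 : (2*n-1-1) % 2 = 0 := by omega
  have hVfin : V (2*n-1-1) = Finset.univ.sup' ⟨⟨0, hn⟩, Finset.mem_univ _⟩
      (fun k => (∑ j, a k j * x j) + c k) + C := by
    have hidxf : idx (2*n-1-1) = ⟨n-1, by omega⟩ := by
      simp only [hidx, Fin.ext_iff]; omega
    have huniv : Finset.Iic (⟨n-1, by omega⟩ : Fin n) = Finset.univ := by
      ext j; simp only [Finset.mem_Iic, Finset.mem_univ, iff_true, Fin.le_def]
      have := j.isLt; omega
    simp only [hV, if_pos hM0, hidxf, hPdef, huniv]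
    rw [sup'_add_const]
  simp only [affineMapVec, hθ, hΦ]
  rw [Fin.sum_univ_castSucc]
  simp only [Fin.lastCases_castSucc, Fin.lastCases_last, zero_mul, one_mul,
    Finset.sum_const_zero, zero_add]
  rw [hVfin]
  ring
/-- Max-affine function: pointwise max of finitely many affine functions. -/
def MA (nx : ℕ) (F : (Fin nx → ℝ) → ℝ) : Prop :=
  ∃ (A : Finset ((Fin nx → ℝ) × ℝ)) (hA : A.Nonempty),
    ∀ x, F x = A.sup' hA (fun q => (∑ j, q.1 j * x j) + q.2)

lemma MA_congr {nx : ℕ} {F G : (Fin nx → ℝ) → ℝ} (h : ∀ x, F x = G x) (hF : MA nx F) :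
    MA nx G := by
  obtain ⟨A, hA, hFA⟩ := hF
  exact ⟨A, hA, fun x => (h x) ▸ hFA x⟩

lemma MA_affine {nx : ℕ} (a : Fin nx → ℝ) (c : ℝ) :
    MA nx (fun x => (∑ j, a j * x j) + c) := by
  refine ⟨{(a, c)}, Finset.singleton_nonempty _, fun x => ?_⟩
  simp

lemma sup'_product_add {α β : Type*} (A : Finset α) (B : Finset β)
    (hA : A.Nonempty) (hB : B.Nonempty) (f : α → ℝ) (g : β → ℝ) :
    (A ×ˢ B).sup' (hA.product hB) (fun pq => f pq.1 + g pq.2) = A.sup' hA f + B.sup' hB g := by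
  apply le_antisymm
  · exact Finset.sup'_le _ _ fun pq hpq =>
      add_le_add (Finset.le_sup' f (Finset.mem_product.mp hpq).1)
        (Finset.le_sup' g (Finset.mem_product.mp hpq).2)
  · obtain ⟨p, hp, hpe⟩ := Finset.exists_mem_eq_sup' hA f
    obtain ⟨q, hq, hqe⟩ := Finset.exists_mem_eq_sup' hB g
    rw [hpe, hqe]
    exact Finset.le_sup' (fun pq => f pq.1 + g pq.2) (Finset.mk_mem_product hp hq)

lemma MA_add {nx : ℕ} {F G : (Fin nx → ℝ) → ℝ} (hF : MA nx F) (hG : MA nx G) :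
    MA nx (fun x => F x + G x) := by
  obtain ⟨A, hA, hFA⟩ := hF
  obtain ⟨B, hB, hGB⟩ := hG
  classical
  refine ⟨(A ×ˢ B).image (fun q => (fun j => q.1.1 j + q.2.1 j, q.1.2 + q.2.2)),
    (hA.product hB).image _, fun x => ?_⟩
  show F x + G x = _
  rw [hFA x, hGB x, Finset.sup'_image, ← sup'_product_add A B hA hB]
  refine Finset.sup'_congr _ rfl fun pq hpq => ?_
  show ((∑ j, pq.1.1 j * x j) + pq.1.2) + ((∑ j, pq.2.1 j * x j) + pq.2.2)
      = (∑ j, (pq.1.1 j + pq.2.1 j) * x j) + (pq.1.2 + pq.2.2)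
  simp only [add_mul, Finset.sum_add_distrib]
  ring

lemma MA_max {nx : ℕ} {F G : (Fin nx → ℝ) → ℝ} (hF : MA nx F) (hG : MA nx G) :
    MA nx (fun x => max (F x) (G x)) := by
  obtain ⟨A, hA, hFA⟩ := hF
  obtain ⟨B, hB, hGB⟩ := hG
  classical
  refine ⟨A ∪ B, hA.mono Finset.subset_union_left, fun x => ?_⟩
  show max (F x) (G x) = _
  rw [hFA x, hGB x, Finset.sup'_union hA hB]

lemma MA_sup' {nx : ℕ} {ι : Type*} (s : Finset ι)
    (F : ι → (Fin nx → ℝ) → ℝ) :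
    ∀ (_ : ∀ i ∈ s, MA nx (F i)) (hs : s.Nonempty),
      MA nx (fun x => s.sup' hs (fun i => F i x)) := by
  classical
  induction s using Finset.induction_on with
  | empty => intro _ hs; exact absurd hs (by simp)
  | @insert a t ha ih =>
    intro h hs
    by_cases ht : t.Nonempty
    · have h1 := ih (fun j hj => h j (Finset.mem_insert_of_mem hj)) ht
      have h2 := h a (Finset.mem_insert_self a t)
      refine MA_congr (fun x => ?_) (MA_max h2 h1)
      rw [Finset.sup'_insert ht]
    · have : t = ∅ := Finset.not_nonempty_iff_eq_empty.mp ht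
      subst this
      refine MA_congr (fun x => ?_) (h a (Finset.mem_insert_self a ∅))
      simp

lemma MA_sum {nx : ℕ} {ι : Type*} (s : Finset ι)
    (F : ι → (Fin nx → ℝ) → ℝ) (h : ∀ i ∈ s, MA nx (F i)) :
    MA nx (fun x => ∑ i ∈ s, F i x) := by
  classical
  induction s using Finset.induction_on with
  | empty =>
    refine MA_congr (fun x => ?_) (MA_affine (fun _ => 0) 0)
    simp
  | @insert i t hi ih =>
    have h1 := ih (fun j hj => h j (Finset.mem_insert_of_mem hj))
    have h2 := h i (Finset.mem_insert_self i t)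
    refine MA_congr (fun x => ?_) (MA_add h2 h1)
    rw [Finset.sum_insert hi]

lemma MA_of_sup'_affine {nx : ℕ} {ι : Type*} (s : Finset ι) (hs : s.Nonempty)
    (av : ι → Fin nx → ℝ) (cv : ι → ℝ) :
    MA nx (fun x => s.sup' hs (fun i => (∑ j, av i j * x j) + cv i)) :=
  MA_sup' s _ (fun i _ => MA_affine (av i) (cv i)) hs

lemma isPolyhedron_closed_convex {n : ℕ} {S : Set (Fin n → ℝ)} (h : IsPolyhedron S) :
    IsClosed S ∧ Convex ℝ S := by
  obtain ⟨m, Z, z, rfl⟩ := h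
  have hset : {x : Fin n → ℝ | ∀ i, (∑ j, Z i j * x j) ≤ z i}
      = ⋂ i, {x : Fin n → ℝ | (∑ j, Z i j * x j) ≤ z i} := by
    ext x; simp [Set.mem_iInter]
  rw [hset]
  constructor
  · refine isClosed_iInter fun i => isClosed_le ?_ continuous_const
    exact continuous_finset_sum _ fun j _ => continuous_const.mul (continuous_apply j)
  · refine convex_iInter fun i => ?_
    refine convex_halfSpace_le ⟨fun u v => ?_, fun t u => ?_⟩ (z i)
    · simp only [Pi.add_apply, mul_add, Finset.sum_add_distrib]
    · simp only [Pi.smul_apply, smul_eq_mul, Finset.mul_sum]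
      congr 1; funext j; ring
lemma key_two_point {nx r : ℕ} (R : Fin r → Set (Fin nx → ℝ))
    (ℓ : Fin r → (Fin nx → ℝ) → ℝ) (f : (Fin nx → ℝ) → ℝ)
    (hℓaff : ∀ (p : Fin r) (y z : Fin nx → ℝ) (t : ℝ),
      ℓ p (fun j => y j + t * (z j - y j)) = ℓ p y + t * (ℓ p z - ℓ p y))
    (hclosed : ∀ p, IsClosed (R p)) (hconv : ∀ p, Convex ℝ (R p))
    (hcover : ∀ y ∈ unitCube nx, ∃ p, y ∈ R p)
    (haff : ∀ p, ∀ y ∈ R p, f y = ℓ p y)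
    (hcont : ContinuousOn f (unitCube nx))
    {x z : Fin nx → ℝ} (hx : x ∈ unitCube nx) (hz : z ∈ unitCube nx) :
    ∃ p, f x ≤ ℓ p x ∧ ℓ p z ≤ f z := by
  classical
  set γ : ℝ → (Fin nx → ℝ) := fun t j => x j + t * (z j - x j) with hγ
  have hγ0 : γ 0 = x := by funext j; simp [hγ]
  have hγ1 : γ 1 = z := by funext j; simp [hγ]
  have hγcube : ∀ t ∈ Set.Icc (0:ℝ) 1, γ t ∈ unitCube nx := by
    intro t ht j
    have h1 := hx j; have h2 := hz j
    have hγtj : γ t j = x j + t * (z j - x j) := rfl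
    rw [hγtj]
    constructor <;> nlinarith [ht.1, ht.2, h1.1, h1.2, h2.1, h2.2]
  have hγcont : Continuous γ := by
    apply continuous_pi; intro j; fun_prop
  set J : Fin r → Set ℝ := fun p => Set.Icc (0:ℝ) 1 ∩ γ ⁻¹' (R p) with hJ
  have hJclosed : ∀ p, IsClosed (J p) := fun p =>
    isClosed_Icc.inter ((hclosed p).preimage hγcont)
  have hJsub : ∀ p, J p ⊆ Set.Icc (0:ℝ) 1 := fun p => Set.inter_subset_left
  have hJord : ∀ p, Set.OrdConnected (J p) := by
    intro p
    constructor
    intro t1 ht1 t2 ht2 t ht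
    constructor
    · exact Set.Icc_subset_Icc ht1.1.1 ht2.1.2 ht
    · rcases eq_or_lt_of_le (ht.1.trans ht.2) with heq | hlt
      · have : t = t1 := le_antisymm (heq ▸ ht.2) ht.1
        rw [this]; exact ht1.2
      · set aa := (t2 - t) / (t2 - t1) with haa
        set bb := (t - t1) / (t2 - t1) with hbb
        have hne : t2 - t1 ≠ 0 := by intro h; rw [sub_eq_zero] at h; rw [h] at hlt; exact lt_irrefl _ hlt
        have h1 : (0:ℝ) ≤ aa := by apply div_nonneg <;> linarith [ht.1, ht.2]
        have h2 : (0:ℝ) ≤ bb := by apply div_nonneg <;> linarith [ht.1, ht.2]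
        have h3 : aa + bb = 1 := by rw [haa, hbb]; field_simp; ring
        have hgoal := hconv p ht1.2 ht2.2 h1 h2 h3
        have heqγ : aa • γ t1 + bb • γ t2 = γ t := by
          funext j
          have e1 : (aa • γ t1 + bb • γ t2) j
              = aa * (x j + t1 * (z j - x j)) + bb * (x j + t2 * (z j - x j)) := rfl
          rw [e1]
          show _ = x j + t * (z j - x j)
          rw [haa, hbb]
          field_simp
          ring
        rwa [heqγ] at hgoal
  have hJcover : ∀ t ∈ Set.Icc (0:ℝ) 1, ∃ p, t ∈ J p := fun t ht =>
    (hcover (γ t) (hγcube t ht)).imp (fun p hp => ⟨ht, hp⟩)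
  have hh : ContinuousOn (fun t => f (γ t)) (Set.Icc (0:ℝ) 1) :=
    hcont.comp hγcont.continuousOn (fun t ht => hγcube t ht)
  have haffJ : ∀ p, ∀ t ∈ J p, f (γ t) = ℓ p x + t * (ℓ p z - ℓ p x) := by
    intro p t ht
    rw [haff p _ ht.2]
    exact hℓaff p x z t
  set P : Finset (Fin r) := Finset.univ.filter (fun p => (J p).Nontrivial) with hP
  have hPne : P.Nonempty := by
    by_contra hemp
    have hsub : ∀ p, (J p).Subsingleton := by
      intro p
      rw [← Set.not_nontrivial_iff]
      intro hnt
      exact hemp ⟨p, Finset.mem_filter.mpr ⟨Finset.mem_univ p, hnt⟩⟩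
    have hfin : (⋃ p, J p).Finite := Set.finite_iUnion (fun p => (hsub p).finite)
    have hIccsub : Set.Icc (0:ℝ) 1 ⊆ ⋃ p, J p := fun t ht =>
      Set.mem_iUnion.mpr (hJcover t ht)
    exact Set.infinite_coe_iff.mp (Set.Icc.infinite (by norm_num : (0:ℝ) < 1)) (hfin.subset hIccsub)
  set σ : Fin r → ℝ := fun p => ℓ p z - ℓ p x with hσ
  set s := P.inf' hPne σ with hsdef
  obtain ⟨p₀, hp₀P, hs⟩ := Finset.exists_mem_eq_inf' hPne σ
  have hσs : ∀ p ∈ P, s ≤ σ p := fun p hp => Finset.inf'_le σ hp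
  set φ : ℝ → ℝ := fun t => f (γ t) - s * t with hφdef
  have hφcont : ContinuousOn φ (Set.Icc (0:ℝ) 1) :=
    hh.sub ((continuous_const.mul continuous_id).continuousOn)
  -- right-local lemma
  have rightlocal : ∀ t, 0 ≤ t → t < 1 → ∃ u, t < u ∧ u ≤ 1 ∧
      ∃ p ∈ P, t ∈ J p ∧ u ∈ J p := by
    intro t ht0 ht1
    set u : ℕ → ℝ := fun m => t + (1 - t)/(m + 2) with hu
    have humem : ∀ m : ℕ, u m ∈ Set.Icc (0:ℝ) 1 := by
      intro m
      have hum : u m = t + (1 - t)/((m:ℝ) + 2) := rfl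
      have hpos : (0:ℝ) < (m:ℝ) + 2 := by positivity
      rw [Set.mem_Icc, hum]
      constructor
      · have : (0:ℝ) ≤ (1 - t)/((m:ℝ) + 2) := by apply div_nonneg <;> linarith
        linarith
      · have : (1 - t)/((m:ℝ) + 2) ≤ 1 - t := div_le_self (by linarith) (by linarith [Nat.cast_nonneg (α := ℝ) m])
        linarith
    have hugt : ∀ m : ℕ, t < u m := by
      intro m
      have hum : u m = t + (1 - t)/((m:ℝ) + 2) := rfl
      have : (0:ℝ) < (1 - t)/((m:ℝ) + 2) := by apply div_pos <;> [linarith; positivity]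
      rw [hum]; linarith
    choose pn hpn using fun m => hJcover (u m) (humem m)
    obtain ⟨p, hp⟩ := Finite.exists_infinite_fiber pn
    have hfib : (pn ⁻¹' {p} : Set ℕ).Infinite := Set.infinite_coe_iff.mp hp
    have htJ : t ∈ J p := by
      have hcl : t ∈ closure (J p) := by
        rw [Metric.mem_closure_iff]
        intro ε hε
        obtain ⟨m, hm, hgt⟩ := hfib.exists_gt ⌈(1 - t)/ε⌉₊
        refine ⟨u m, ?_, ?_⟩
        · have hpm : pn m = p := hm
          rw [← hpm]; exact hpn m
        · have h1 : dist t (u m) = (1 - t)/(m + 2) := by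
            rw [Real.dist_eq, hu]
            have h0 : (0:ℝ) ≤ (1 - t)/(m + 2) := by
              apply div_nonneg <;> [linarith; positivity]
            rw [abs_sub_comm]
            rw [abs_of_nonneg (by linarith [hugt m] : (0:ℝ) ≤ t + (1-t)/(m+2) - t)]
            ring
          rw [h1]
          have hceil : (1 - t)/ε ≤ (⌈(1 - t)/ε⌉₊ : ℝ) := Nat.le_ceil _
          have hm2 : ((⌈(1 - t)/ε⌉₊ : ℝ)) < (m:ℝ) := by exact_mod_cast hgt
          have hpos : (0:ℝ) < (m:ℝ) + 2 := by positivity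
          rw [div_lt_iff₀ hpos]
          have h3 : 1 - t ≤ (⌈(1 - t)/ε⌉₊ : ℝ) * ε := (div_le_iff₀ hε).mp hceil
          have h4 : ((⌈(1 - t)/ε⌉₊ : ℝ)) * ε < ((m:ℝ) + 2) * ε :=
            mul_lt_mul_of_pos_right (by linarith) hε
          nlinarith [h3, h4]
      rwa [(hJclosed p).closure_eq] at hcl
    obtain ⟨m0, hm0⟩ := hfib.nonempty
    have hm0J : u m0 ∈ J p := by
      have : pn m0 = p := hm0
      rw [← this]; exact hpn m0
    refine ⟨u m0, hugt m0, (humem m0).2, p, ?_, htJ, hm0J⟩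
    refine Finset.mem_filter.mpr ⟨Finset.mem_univ p, ⟨t, htJ, u m0, hm0J, ne_of_lt (hugt m0)⟩⟩
  -- monotonicity of φ
  have φmono : ∀ t1 t2 : ℝ, 0 ≤ t1 → t1 ≤ t2 → t2 ≤ 1 → φ t1 ≤ φ t2 := by
    intro t1 t2 h0 h12 h21
    set S : Set ℝ := {t | t ∈ Set.Icc t1 t2 ∧ φ t1 ≤ φ t} with hSdef
    have hsubIcc : Set.Icc t1 t2 ⊆ Set.Icc (0:ℝ) 1 := Set.Icc_subset_Icc h0 h21
    have hSclosed : IsClosed S := by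
      have : S = Set.Icc t1 t2 ∩ φ ⁻¹' (Set.Ici (φ t1)) := rfl
      rw [this]
      exact (hφcont.mono hsubIcc).preimage_isClosed_of_isClosed isClosed_Icc isClosed_Ici
    have hne : S.Nonempty := ⟨t1, ⟨le_rfl, h12⟩, le_rfl⟩
    have hbdd : BddAbove S := ⟨t2, fun t ht => ht.1.2⟩
    have hcS : sSup S ∈ S := hSclosed.csSup_mem hne hbdd
    set cc := sSup S with hcc
    by_cases hct : cc = t2
    · rw [hct] at hcS; exact hcS.2
    · exfalso
      have hcc2 : cc < t2 := lt_of_le_of_ne hcS.1.2 hct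
      have hcc1 : cc < 1 := lt_of_lt_of_le hcc2 h21
      have hcc0 : 0 ≤ cc := le_trans h0 hcS.1.1
      obtain ⟨u, hcu, hu1, p, hpP, hcJ, huJ⟩ := rightlocal cc hcc0 hcc1
      set u' := min u t2 with hu'
      have hc' : cc < u' := lt_min hcu hcc2
      have hu'J : u' ∈ J p := (hJord p).out hcJ huJ ⟨le_of_lt hc', min_le_left u t2⟩
      have hstep : φ cc ≤ φ u' := by
        have h1 := haffJ p cc hcJ
        have h2 := haffJ p u' hu'J
        have hσp := hσs p hpP
        have : φ u' - φ cc = (σ p - s) * (u' - cc) := by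
          simp only [hφdef]
          rw [h1, h2, hσ]
          ring
        nlinarith
      have hu'S : u' ∈ S := ⟨⟨le_trans hcS.1.1 (le_of_lt hc'), min_le_right u t2⟩,
        le_trans hcS.2 hstep⟩
      have := le_csSup hbdd hu'S
      rw [← hcc] at this
      linarith
  -- conclude
  have hp₀nt : (J p₀).Nontrivial := (Finset.mem_filter.mp hp₀P).2
  obtain ⟨a, haJ⟩ := hp₀nt.nonempty
  have ha01 : a ∈ Set.Icc (0:ℝ) 1 := hJsub p₀ haJ
  have hsp : s = ℓ p₀ z - ℓ p₀ x := by rw [hsdef, hs]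
  have hφa : φ a = ℓ p₀ x := by
    simp only [hφdef]
    rw [haffJ p₀ a haJ, hsp]
    ring
  have hφ0 : φ 0 = f x := by simp only [hφdef]; rw [hγ0]; ring
  have hφ1 : φ 1 = f z - s := by simp only [hφdef]; rw [hγ1]; ring
  have h1 : f x ≤ ℓ p₀ x := by
    have := φmono 0 a le_rfl ha01.1 ha01.2
    rwa [hφ0, hφa] at this
  have h2 : ℓ p₀ z ≤ f z := by
    have := φmono a 1 ha01.1 ha01.2 le_rfl
    rw [hφa, hφ1] at this
    linarith [hsp]
  exact ⟨p₀, h1, h2⟩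
lemma pwa_dc {nx r : ℕ} (R : Fin r → Set (Fin nx → ℝ)) (am : Fin r → Fin nx → ℝ)
    (co : Fin r → ℝ) (f : (Fin nx → ℝ) → ℝ)
    (hpoly : ∀ p, IsPolyhedron (R p))
    (hcoverU : (⋃ p, R p) = unitCube nx)
    (haff : ∀ p, ∀ y ∈ R p, f y = (∑ j, am p j * y j) + co p)
    (hcont : ContinuousOn f (unitCube nx)) :
    ∃ F G, MA nx F ∧ MA nx G ∧ ∀ x ∈ unitCube nx, f x = F x - G x := by
  classical
  set ℓ : Fin r → (Fin nx → ℝ) → ℝ := fun p y => (∑ j, am p j * y j) + co p with hℓ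
  have hℓaff : ∀ (p : Fin r) (y z : Fin nx → ℝ) (t : ℝ),
      ℓ p (fun j => y j + t * (z j - y j)) = ℓ p y + t * (ℓ p z - ℓ p y) := by
    intro p y z t
    show (∑ j, am p j * (y j + t * (z j - y j))) + co p
        = ((∑ j, am p j * y j) + co p)
          + t * (((∑ j, am p j * z j) + co p) - ((∑ j, am p j * y j) + co p))
    have e1 : ∀ j ∈ Finset.univ, am p j * (y j + t * (z j - y j))
        = am p j * y j + (t * (am p j * z j) - t * (am p j * y j)) := fun j _ => by ring
    rw [Finset.sum_congr rfl e1, Finset.sum_add_distrib, Finset.sum_sub_distrib,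
      ← Finset.mul_sum, ← Finset.mul_sum]
    ring
  have hcover : ∀ y ∈ unitCube nx, ∃ p, y ∈ R p := by
    intro y hy
    rw [← hcoverU] at hy
    exact Set.mem_iUnion.mp hy
  have hclosed : ∀ p, IsClosed (R p) := fun p => (isPolyhedron_closed_convex (hpoly p)).1
  have hconv : ∀ p, Convex ℝ (R p) := fun p => (isPolyhedron_closed_convex (hpoly p)).2
  have haff' : ∀ p, ∀ y ∈ R p, f y = ℓ p y := haff
  have key : ∀ x ∈ unitCube nx, ∀ z ∈ unitCube nx, ∃ p, f x ≤ ℓ p x ∧ ℓ p z ≤ f z :=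
    fun x hx z hz => key_two_point R ℓ f hℓaff hclosed hconv hcover haff' hcont hx hz
  set cS : Finset (Fin r) → (Fin nx → ℝ) → ℝ :=
    fun S y => if h : S.Nonempty then S.sup' h (fun p => -(ℓ p y)) else 0 with hcS
  set 𝒮 : Finset (Finset (Fin r)) :=
    Finset.univ.filter (fun S => S.Nonempty ∧ ∀ z ∈ unitCube nx, -(cS S z) ≤ f z) with h𝒮
  have hT : ∀ x ∈ unitCube nx, (Finset.univ.filter (fun p => f x ≤ ℓ p x)) ∈ 𝒮 ∧
      -(cS (Finset.univ.filter (fun p => f x ≤ ℓ p x)) x) = f x := by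
    intro x hx
    set T := Finset.univ.filter (fun p => f x ≤ ℓ p x) with hTd
    obtain ⟨p₁, hp₁⟩ := hcover x hx
    have hp₁T : p₁ ∈ T := Finset.mem_filter.mpr ⟨Finset.mem_univ _, le_of_eq (haff' p₁ x hp₁)⟩
    have hTne : T.Nonempty := ⟨p₁, hp₁T⟩
    have hprop : ∀ z ∈ unitCube nx, -(cS T z) ≤ f z := by
      intro z hz
      obtain ⟨p, hp1, hp2⟩ := key x hx z hz
      have hpT : p ∈ T := Finset.mem_filter.mpr ⟨Finset.mem_univ _, hp1⟩
      have hcTz : cS T z = T.sup' hTne (fun p => -(ℓ p z)) := dif_pos hTne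
      have : -(ℓ p z) ≤ cS T z := by
        rw [hcTz]
        exact Finset.le_sup' (fun p => -(ℓ p z)) hpT
      linarith
    have hcTx : cS T x = T.sup' hTne (fun p => -(ℓ p x)) := dif_pos hTne
    have hval : cS T x = -(f x) := by
      rw [hcTx]
      apply le_antisymm
      · apply Finset.sup'_le
        intro p hp
        have := (Finset.mem_filter.mp hp).2
        linarith
      · have hle := Finset.le_sup' (fun p => -(ℓ p x)) hp₁T
        have heq := haff' p₁ x hp₁
        calc -(f x) = -(ℓ p₁ x) := by rw [heq]
          _ ≤ _ := hle
    exact ⟨Finset.mem_filter.mpr ⟨Finset.mem_univ _, hTne, hprop⟩, by rw [hval]; ring⟩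
  have h𝒮ne : 𝒮.Nonempty := by
    have h0 : (fun _ => (0:ℝ)) ∈ unitCube nx := fun i => ⟨le_rfl, zero_le_one⟩
    exact ⟨_, (hT _ h0).1⟩
  have h𝒮S : ∀ S ∈ 𝒮, S.Nonempty := fun S hS => (Finset.mem_filter.mp hS).2.1
  have hMA_cS : ∀ S, S.Nonempty → MA nx (cS S) := by
    intro S h
    refine MA_congr (fun y => ?_)
      (MA_of_sup'_affine S h (fun p j => -(am p j)) (fun p => -(co p)))
    have hcSy : cS S y = S.sup' h (fun p => -(ℓ p y)) := dif_pos h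
    rw [hcSy]
    show S.sup' h (fun p => (∑ j, -(am p j) * y j) + -(co p)) = _
    refine Finset.sup'_congr h rfl fun p hp => ?_
    show (∑ j, -(am p j) * y j) + -(co p) = -(ℓ p y)
    show _ = -((∑ j, am p j * y j) + co p)
    simp only [neg_mul, Finset.sum_neg_distrib]
    ring
  set G : (Fin nx → ℝ) → ℝ := fun y => ∑ S ∈ 𝒮, cS S y with hG
  set F : (Fin nx → ℝ) → ℝ := fun y => 𝒮.sup' h𝒮ne (fun S => ∑ S' ∈ 𝒮.erase S, cS S' y)
    with hF
  have hMAG : MA nx G := MA_sum 𝒮 cS (fun S hS => hMA_cS S (h𝒮S S hS))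
  have hMAF : MA nx F := MA_sup' 𝒮 _ (fun S hS => MA_sum (𝒮.erase S) cS
      (fun S' hS' => hMA_cS S' (h𝒮S S' (Finset.mem_of_mem_erase hS')))) h𝒮ne
  refine ⟨F, G, hMAF, hMAG, ?_⟩
  intro x hx
  have hstar : 𝒮.sup' h𝒮ne (fun S => -(cS S x)) = f x := by
    apply le_antisymm
    · apply Finset.sup'_le
      intro S hS
      exact (Finset.mem_filter.mp hS).2.2 x hx
    · obtain ⟨hTmem, hTval⟩ := hT x hx
      rw [← hTval]
      exact Finset.le_sup' (fun S => -(cS S x)) hTmem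
  have h1 : ∀ S ∈ 𝒮, (∑ S' ∈ 𝒮.erase S, cS S' x) = -(cS S x) + G x := by
    intro S hS
    have h2 := Finset.sum_erase_add 𝒮 (fun S' => cS S' x) hS
    have hGx : G x = ∑ S' ∈ 𝒮, cS S' x := rfl
    linarith
  have hFx : F x = 𝒮.sup' h𝒮ne (fun S => -(cS S x) + G x) := Finset.sup'_congr h𝒮ne rfl h1
  rw [hFx, sup'_add_const 𝒮 h𝒮ne (fun S => -(cS S x)) (G x), hstar]
  ring

lemma MA_network {nx : ℕ} (F : (Fin nx → ℝ) → ℝ) (h : MA nx F) :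
    ∃ L, 1 ≤ L ∧ ∃ θ : ReLUNetParams nx 1 (nx + 1) L,
      ∀ x ∈ unitCube nx, θ.eval x 0 = F x := by
  classical
  obtain ⟨A, hA, hFA⟩ := h
  have hn : 0 < A.card := Finset.card_pos.mpr hA
  set e := A.equivFin with he
  set a : Fin A.card → Fin nx → ℝ := fun k => ((e.symm k : A) : (Fin nx → ℝ) × ℝ).1 with ha
  set c : Fin A.card → ℝ := fun k => ((e.symm k : A) : (Fin nx → ℝ) × ℝ).2 with hc
  obtain ⟨L, hL, θ, hθ⟩ := maxaffine_network nx A.card hn a c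
  refine ⟨L, hL, θ, fun x hx => ?_⟩
  rw [hθ x hx, hFA x]
  apply le_antisymm
  · apply Finset.sup'_le
    intro k _
    exact Finset.le_sup' (fun q : (Fin nx → ℝ) × ℝ => (∑ j, q.1 j * x j) + q.2) (e.symm k).2
  · apply Finset.sup'_le
    intro q hq
    have hqe : (∑ j, q.1 j * x j) + q.2
        = (∑ j, a (e ⟨q, hq⟩) j * x j) + c (e ⟨q, hq⟩) := by
      rw [ha, hc]
      simp only [Equiv.symm_apply_apply]
    rw [hqe]
    exact Finset.le_sup' (fun k => (∑ j, a k j * x j) + c k) (Finset.mem_univ (e ⟨q, hq⟩))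

/-- a continuous PWA map `K : [0,1]^{nx} → ℝ^{nu}` with nonnegative components
is exactly represented componentwise by `2 nu` ReLU networks of width `nx + 1`. -/
theorem mpc_law_exact_relu_representation (nx nu : ℕ) (K : (Fin nx → ℝ) → Fin nu → ℝ)
    (hcont : ContinuousOn K (unitCube nx))
    (hpwa : IsPWAOn (unitCube nx) K)
    (hnonneg : ∀ x ∈ unitCube nx, ∀ i, 0 ≤ K x i) :
    ∃ (rγ rη : Fin nu → ℕ), (∀ i, 1 ≤ rγ i) ∧ (∀ i, 1 ≤ rη i) ∧
      ∃ (θγ : ∀ i, ReLUNetParams nx 1 (nx + 1) (rγ i))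
        (θη : ∀ i, ReLUNetParams nx 1 (nx + 1) (rη i)),
        ∀ x ∈ unitCube nx, ∀ i, K x i = (θγ i).eval x 0 - (θη i).eval x 0 := by
  classical
  obtain ⟨r, R, Km, gk, hpoly, hdisj, hcover, haff⟩ := hpwa
  have main : ∀ i : Fin nu, ∃ (Lγ : ℕ) (Lη : ℕ) (_ : 1 ≤ Lγ) (_ : 1 ≤ Lη)
      (θγ : ReLUNetParams nx 1 (nx + 1) Lγ) (θη : ReLUNetParams nx 1 (nx + 1) Lη),
      ∀ x ∈ unitCube nx, K x i = θγ.eval x 0 - θη.eval x 0 := by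
    intro i
    have hscont : ContinuousOn (fun x => K x i) (unitCube nx) :=
      (continuous_apply i).comp_continuousOn hcont
    have haffs : ∀ p, ∀ y ∈ R p, (fun x => K x i) y = (∑ j, Km p i j * y j) + gk p i :=
      fun p y hy => by show K y i = _; rw [haff p y hy]; rfl
    obtain ⟨F, G, hMAF, hMAG, hFG⟩ := pwa_dc R (fun p => Km p i) (fun p => gk p i)
      (fun x => K x i) hpoly hcover haffs hscont
    obtain ⟨Lγ, hLγ, θγ, hγ⟩ := MA_network F hMAF
    obtain ⟨Lη, hLη, θη, hη⟩ := MA_network G hMAG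
    exact ⟨Lγ, Lη, hLγ, hLη, θγ, θη, fun x hx => by
      rw [hγ x hx, hη x hx]; exact hFG x hx⟩
  choose Lγ Lη h1 h2 θγ θη h3 using main
  exact ⟨Lγ, Lη, h1, h2, θγ, θη, fun x hx i => h3 i x hx⟩
end
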